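/- arXiv:1811.12767 — 3 statements merged into one kernel-verified Lean document; each statement's English description precedes it below -/
import Mathlib

section
/- Let Λ : ℝ → ℂ be a trigonometric polynomial, Λ(s) = ∑_{k ∈ K} a_k exp(i k s), where K is a finite set of integers and a_k ∈ ℂ. Let M be a positive integer, Δs = 2π/M, and let b_1,…,b_σ ∈ ℝ and c_1,…,c_σ ∈ ℝ be the weights and abscissas of a consistent Runge–Kutta method, i.e. ∑_{j=1}^σ b_j = 1. Assume that for every nonzero k ∈ K one has exp(i k Δs) ≠ 1 (which holds whenever Δs is sufficiently small). Then the Runge–Kutta quadrature approximation y_{m+1} = y_m + Δs ∑_{j=1}^σ b_j Λ((m + c_j)Δs), y_0 given, satisfies y_M = y_0 + ∫_0^{2π} Λ(s) ds; that is, the numerical solution is exact at s = 2π. -/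
open Real

/-- For a trigonometric polynomial `Λ(s) = ∑_{k ∈ K} a_k exp(iks)`, a consistent Runge–Kutta
quadrature with step `Δs = 2π/M`, such that `exp(ikΔs) ≠ 1` for every nonzero `k ∈ K`,
is exact at `s = 2π`: `y M = y 0 + ∫_0^{2π} Λ`. -/
theorem rk_exact_trig_poly (K : Finset ℤ) (a : ℤ → ℂ)
    (Λ : ℝ → ℂ)
    (hΛ : ∀ s : ℝ, Λ s = ∑ k ∈ K, a k * Complex.exp (Complex.I * (k : ℂ) * (s : ℂ)))
    (M : ℕ) (hM : 0 < M) (Δs : ℝ) (hΔs : Δs = 2 * π / M)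
    (σ : ℕ) (hσ : 0 < σ) (b c : Fin σ → ℝ)
    (hconsistent : ∑ j, b j = 1)
    (halias : ∀ k ∈ K, k ≠ 0 → Complex.exp (Complex.I * (k : ℂ) * (Δs : ℂ)) ≠ 1)
    (y : ℕ → ℂ)
    (hrec : ∀ m : ℕ, y (m + 1) =
      y m + (Δs : ℂ) * ∑ j, (b j : ℂ) * Λ (((m : ℝ) + c j) * Δs)) :
    y M = y 0 + ∫ s in (0:ℝ)..(2 * π), Λ s := by
  have hMR : (M : ℝ) ≠ 0 := Nat.cast_ne_zero.mpr hM.ne'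
  have hΔsM : Δs * M = 2 * π := by rw [hΔs]; field_simp
  have hΔsMC : (Δs : ℂ) * (M : ℂ) = 2 * (π : ℂ) := by exact_mod_cast congrArg Complex.ofReal hΔsM
  -- telescoping
  have hsum : ∀ n : ℕ, y n = y 0 + ∑ m ∈ Finset.range n,
      (Δs : ℂ) * ∑ j, (b j : ℂ) * Λ (((m : ℝ) + c j) * Δs) := by
    intro n
    induction n with
    | zero => simp
    | succ n ih => rw [hrec n, ih, Finset.sum_range_succ]; ring
  -- inner exponential sum over m
  have hexp : ∀ k ∈ K, ∀ cj : ℝ,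
      ∑ m ∈ Finset.range M, Complex.exp (Complex.I * (k:ℂ) * ((((m:ℝ) + cj) * Δs : ℝ) : ℂ))
        = if k = 0 then (M : ℂ) else 0 := by
    intro k hk cj
    by_cases hk0 : k = 0
    · simp [hk0]
    · simp only [hk0, if_false]
      have hr : Complex.exp (Complex.I * (k:ℂ) * (Δs:ℂ)) ≠ 1 := halias k hk hk0
      have key : ∀ m ∈ Finset.range M,
          Complex.exp (Complex.I * (k:ℂ) * ((((m:ℝ) + cj) * Δs : ℝ) : ℂ))
            = Complex.exp (Complex.I * (k:ℂ) * ((cj : ℂ) * (Δs:ℂ))) *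
              Complex.exp (Complex.I * (k:ℂ) * (Δs:ℂ)) ^ m := by
        intro m _
        rw [← Complex.exp_nat_mul, ← Complex.exp_add]
        push_cast
        ring_nf
      rw [Finset.sum_congr rfl key, ← Finset.mul_sum, geom_sum_eq hr]
      have hpow : Complex.exp (Complex.I * (k:ℂ) * (Δs:ℂ)) ^ M = 1 := by
        rw [← Complex.exp_nat_mul]
        have : (M : ℂ) * (Complex.I * (k:ℂ) * (Δs:ℂ)) = (k:ℂ) * (2 * (π:ℂ) * Complex.I) := by
          linear_combination (Complex.I * (k:ℂ)) * hΔsMC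
        rw [this, Complex.exp_int_mul_two_pi_mul_I]
      rw [hpow]
      simp
  -- sum over m of Λ on the grid, for each stage j
  have hinner : ∀ j : Fin σ, ∑ m ∈ Finset.range M, Λ (((m:ℝ) + c j) * Δs)
      = ∑ k ∈ K, a k * (if k = 0 then (M : ℂ) else 0) := by
    intro j
    simp only [hΛ]
    rw [Finset.sum_comm]
    refine Finset.sum_congr rfl fun k hk => ?_
    rw [← Finset.mul_sum, hexp k hk (c j)]
  -- total RK sum
  have hT : ∑ m ∈ Finset.range M, ((Δs : ℂ) * ∑ j, (b j : ℂ) * Λ (((m : ℝ) + c j) * Δs))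
      = ∑ k ∈ K, a k * (if k = 0 then (2 * (π:ℂ)) else 0) := by
    rw [← Finset.mul_sum, Finset.sum_comm]
    simp only [← Finset.mul_sum]
    simp only [hinner]
    rw [← Finset.sum_mul]
    have hb : (∑ j, (b j : ℂ)) = 1 := by
      rw [← Complex.ofReal_sum, hconsistent, Complex.ofReal_one]
    rw [hb, one_mul, Finset.mul_sum]
    refine Finset.sum_congr rfl fun k hk => ?_
    by_cases hk0 : k = 0
    · simp only [hk0, if_true]
      linear_combination a 0 * hΔsMC
    · simp [hk0]
  -- the integral
  have hint : ∀ k ∈ K, (∫ s in (0:ℝ)..(2*π), Complex.exp (Complex.I * (k:ℂ) * (s:ℂ)))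
      = if k = 0 then (2 * (π:ℂ)) else 0 := by
    intro k hk
    by_cases hk0 : k = 0
    · simp [hk0]
    · simp only [hk0, if_false]
      have hc : Complex.I * (k:ℂ) ≠ 0 := by
        exact mul_ne_zero Complex.I_ne_zero (Int.cast_ne_zero.mpr hk0)
      have : ∀ s : ℝ, Complex.exp (Complex.I * (k:ℂ) * (s:ℂ))
          = Complex.exp ((Complex.I * (k:ℂ)) * (s:ℂ)) := fun s => rfl
      rw [integral_exp_mul_complex hc]
      have h1 : Complex.I * (k:ℂ) * ((2*π : ℝ) : ℂ) = (k:ℂ) * (2 * (π:ℂ) * Complex.I) := by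
        push_cast; ring
      have h2 : Complex.I * (k:ℂ) * ((0 : ℝ) : ℂ) = 0 := by push_cast; ring
      rw [h1, h2, Complex.exp_int_mul_two_pi_mul_I, Complex.exp_zero]
      simp
  have hintΛ : (∫ s in (0:ℝ)..(2*π), Λ s)
      = ∑ k ∈ K, a k * (if k = 0 then (2 * (π:ℂ)) else 0) := by
    have : (∫ s in (0:ℝ)..(2*π), Λ s)
        = ∫ s in (0:ℝ)..(2*π), ∑ k ∈ K, a k * Complex.exp (Complex.I * (k:ℂ) * (s:ℂ)) := by
      apply intervalIntegral.integral_congr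
      intro s _
      exact hΛ s
    rw [this, intervalIntegral.integral_finset_sum]
    · refine Finset.sum_congr rfl fun k hk => ?_
      rw [intervalIntegral.integral_const_mul, hint k hk]
    · intro k _
      apply Continuous.intervalIntegrable
      exact continuous_const.mul (Complex.continuous_exp.comp (by fun_prop))
  rw [hsum M, hT, hintΛ]
end

section
/- Let Λ : ℝ → ℂ be a trigonometric polynomial, Λ(s) = ∑_{k ∈ K} a_k exp(i k s), where K is a finite set of integers and a_k ∈ ℂ. Let M be a positive integer, Δs = 2π/M, and let b_1,…,b_σ, c_1,…,c_σ ∈ ℝ be the weights and abscissas of a consistent Runge–Kutta method (∑_{j=1}^σ b_j = 1). Assume that for every nonzero k ∈ K one has exp(i k Δs) ≠ 1. Then for every positive integer n the Runge–Kutta quadrature approximation y_{m+1} = y_m + Δs ∑_{j=1}^σ b_j Λ((m + c_j)Δs) satisfies y_{nM} = y_0 + ∫_0^{2πn} Λ(s) ds; that is, the numerical solution is exact after any whole number of periods. -/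
open Real

lemma sum_rot_aux {N σ : ℕ} (K : Finset ℤ) (f : ℕ → Fin σ → ℤ → ℂ) :
    ∑ m ∈ Finset.range N, ∑ j, ∑ k ∈ K, f m j k =
    ∑ k ∈ K, ∑ m ∈ Finset.range N, ∑ j, f m j k := by
  have h1 : ∑ m ∈ Finset.range N, ∑ j, ∑ k ∈ K, f m j k =
      ∑ m ∈ Finset.range N, ∑ k ∈ K, ∑ j, f m j k :=
    Finset.sum_congr rfl fun m _ => Finset.sum_comm
  rw [h1, Finset.sum_comm]

/-- For a trigonometric polynomial `Λ`, a consistent Runge–Kutta quadrature with step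
`Δs = 2π/M` avoiding aliasing is exact after any whole number `n` of periods:
`y (n*M) = y 0 + ∫_0^{2πn} Λ`. -/
theorem rk_exact_trig_poly_periods (K : Finset ℤ) (a : ℤ → ℂ)
    (Λ : ℝ → ℂ)
    (hΛ : ∀ s : ℝ, Λ s = ∑ k ∈ K, a k * Complex.exp (Complex.I * (k : ℂ) * (s : ℂ)))
    (M : ℕ) (hM : 0 < M) (Δs : ℝ) (hΔs : Δs = 2 * π / M)
    (σ : ℕ) (hσ : 0 < σ) (b c : Fin σ → ℝ)
    (hconsistent : ∑ j, b j = 1)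
    (halias : ∀ k ∈ K, k ≠ 0 → Complex.exp (Complex.I * (k : ℂ) * (Δs : ℂ)) ≠ 1)
    (y : ℕ → ℂ)
    (hrec : ∀ m : ℕ, y (m + 1) =
      y m + (Δs : ℂ) * ∑ j, (b j : ℂ) * Λ (((m : ℝ) + c j) * Δs))
    (n : ℕ) (hn : 0 < n) :
    y (n * M) = y 0 + ∫ s in (0:ℝ)..(2 * π * n), Λ s := by
  have hMne : (M:ℝ) ≠ 0 := Nat.cast_ne_zero.mpr hM.ne'
  have hT : Δs * ((n : ℝ) * (M : ℝ)) = 2 * π * n := by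
    rw [hΔs]; field_simp
  have hTc : (Δs:ℂ) * ((n : ℂ) * (M : ℂ)) = 2 * π * n := by exact_mod_cast hT
  have hb : ∑ j, (b j : ℂ) = 1 := by exact_mod_cast hconsistent
  -- telescoping
  have htel : ∀ N : ℕ, y N = y 0 + ∑ m ∈ Finset.range N,
      ((Δs:ℂ) * ∑ j, (b j : ℂ) * Λ (((m:ℝ) + c j) * Δs)) := by
    intro N
    induction N with
    | zero => simp
    | succ N ih => rw [Finset.sum_range_succ, hrec N, ih]; ring
  rw [htel (n*M)]
  congr 1
  have key : ∀ k ∈ K, (Δs:ℂ) * ∑ m ∈ Finset.range (n*M), ∑ j,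
      (b j:ℂ) * Complex.exp (Complex.I * (k:ℂ) * ((((m:ℝ) + c j) * Δs : ℝ) : ℂ)) =
      ∫ s in (0:ℝ)..(2*π*n), Complex.exp (Complex.I * (k:ℂ) * (s:ℂ)) := by
    intro k hk
    rcases eq_or_ne k 0 with rfl | hk0
    · simp only [Int.cast_zero, mul_zero, zero_mul, Complex.exp_zero, mul_one,
        intervalIntegral.integral_const, hb, Finset.sum_const, Finset.card_range,
        nsmul_eq_mul, mul_one, sub_zero]
      rw [Complex.real_smul, mul_one]
      push_cast
      linear_combination hTc
    · have hr : Complex.exp (Complex.I * (k:ℂ) * (Δs:ℂ)) ≠ 1 := halias k hk hk0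
      have hc0 : Complex.I * (k:ℂ) ≠ 0 := by
        simp [Complex.I_ne_zero, Complex.ext_iff]
        exact_mod_cast hk0
      have hrp : Complex.exp (Complex.I * (k:ℂ) * (Δs:ℂ)) ^ (n*M) = 1 := by
        rw [← Complex.exp_nat_mul]
        have harg : ((n*M : ℕ):ℂ) * (Complex.I * (k:ℂ) * (Δs:ℂ)) = ((k * n : ℤ):ℂ) * (2*π*Complex.I) := by
          push_cast
          linear_combination (Complex.I * (k:ℂ)) * hTc
        rw [harg, Complex.exp_int_mul_two_pi_mul_I]
      have hterm : ∀ (m : ℕ) (j : Fin σ),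
          Complex.exp (Complex.I * (k:ℂ) * ((((m:ℝ) + c j) * Δs : ℝ) : ℂ)) =
          Complex.exp (Complex.I * (k:ℂ) * (Δs:ℂ)) ^ m *
            Complex.exp (Complex.I * (k:ℂ) * ((c j * Δs : ℝ) : ℂ)) := by
        intro m j
        rw [← Complex.exp_nat_mul, ← Complex.exp_add]
        congr 1
        push_cast
        ring
      have hsum0 : ∑ m ∈ Finset.range (n*M), Complex.exp (Complex.I * (k:ℂ) * (Δs:ℂ)) ^ m = 0 := by
        rw [geom_sum_eq hr, hrp]
        simp
      have hfac : ∑ m ∈ Finset.range (n*M), ∑ j,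
          (b j:ℂ) * Complex.exp (Complex.I * (k:ℂ) * ((((m:ℝ) + c j) * Δs : ℝ) : ℂ)) =
          (∑ m ∈ Finset.range (n*M), Complex.exp (Complex.I * (k:ℂ) * (Δs:ℂ)) ^ m) *
            ∑ j, (b j:ℂ) * Complex.exp (Complex.I * (k:ℂ) * ((c j * Δs : ℝ) : ℂ)) := by
        rw [Finset.sum_mul]
        refine Finset.sum_congr rfl fun m _ => ?_
        rw [Finset.mul_sum]
        refine Finset.sum_congr rfl fun j _ => ?_
        rw [hterm m j]; ring
      rw [hfac, hsum0, zero_mul, mul_zero]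
      rw [integral_exp_mul_complex hc0]
      have harg2 : Complex.I * (k:ℂ) * ((2*π*n : ℝ):ℂ) = ((k * n : ℤ):ℂ) * (2*π*Complex.I) := by
        push_cast; ring
      rw [harg2, Complex.exp_int_mul_two_pi_mul_I]
      simp
  have hR : (∫ s in (0:ℝ)..(2*π*n), Λ s) =
      ∑ k ∈ K, a k * ∫ s in (0:ℝ)..(2*π*n), Complex.exp (Complex.I * (k:ℂ) * (s:ℂ)) := by
    rw [intervalIntegral.integral_congr (g := fun s : ℝ =>
      ∑ k ∈ K, a k * Complex.exp (Complex.I * (k:ℂ) * (s:ℂ))) (fun s _ => hΛ s)]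
    rw [intervalIntegral.integral_finset_sum]
    · exact Finset.sum_congr rfl fun k _ => intervalIntegral.integral_const_mul _ _
    · intro k _
      apply Continuous.intervalIntegrable
      exact (continuous_const.mul ((continuous_const.mul Complex.continuous_ofReal).cexp))
  rw [hR]
  have hL : ∑ m ∈ Finset.range (n*M), ((Δs:ℂ) * ∑ j, (b j : ℂ) * Λ (((m:ℝ) + c j) * Δs)) =
      ∑ k ∈ K, a k * ((Δs:ℂ) * ∑ m ∈ Finset.range (n*M), ∑ j,
        (b j:ℂ) * Complex.exp (Complex.I * (k:ℂ) * ((((m:ℝ) + c j) * Δs : ℝ) : ℂ))) := by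
    simp only [hΛ, Finset.mul_sum]
    rw [sum_rot_aux]
    refine Finset.sum_congr rfl fun k _ => ?_
    refine Finset.sum_congr rfl fun m _ => ?_
    refine Finset.sum_congr rfl fun j _ => ?_
    ring
  rw [hL]
  exact Finset.sum_congr rfl fun k hk => by rw [key k hk]
end

section
/- Let Λ : ℝ → ℂ be a trigonometric polynomial, Λ(s) = ∑_{k ∈ K} a_k exp(i k s), where K is a finite set of integers and a_k ∈ ℂ. Let M be a positive integer, Δs = 2π/M, and let b_1,…,b_σ, c_1,…,c_σ ∈ ℝ be the weights and abscissas of a consistent Runge–Kutta method (∑_{j=1}^σ b_j = 1). Assume that for every nonzero k ∈ K one has exp(i k Δs) ≠ 1. Then the backward Runge–Kutta quadrature approximation defined by y_{-(m+1)} = y_{-m} − Δs ∑_{j=1}^σ b_j Λ(−(m + c_j)Δs), starting from a given y_0, satisfies y_{-M} = y_0 + ∫_0^{−2π} Λ(s) ds = y_0 − ∫_{−2π}^{0} Λ(s) ds; that is, the backward numerical integration over one period is exact at s = −2π. -/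
open Real

/-- For a trigonometric polynomial `Λ`, the backward Runge–Kutta quadrature
`y_{-(m+1)} = y_{-m} − Δs ∑_j b_j Λ(−(m+c_j)Δs)` with step `Δs = 2π/M` avoiding aliasing
is exact at `s = −2π`: writing `z m` for `y_{-m}`,
`z M = z 0 + ∫_0^{−2π} Λ = z 0 − ∫_{−2π}^0 Λ`. -/
theorem rk_backward_exact_trig_poly (K : Finset ℤ) (a : ℤ → ℂ)
    (Λ : ℝ → ℂ)
    (hΛ : ∀ s : ℝ, Λ s = ∑ k ∈ K, a k * Complex.exp (Complex.I * (k : ℂ) * (s : ℂ)))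
    (M : ℕ) (hM : 0 < M) (Δs : ℝ) (hΔs : Δs = 2 * π / M)
    (σ : ℕ) (hσ : 0 < σ) (b c : Fin σ → ℝ)
    (hconsistent : ∑ j, b j = 1)
    (halias : ∀ k ∈ K, k ≠ 0 → Complex.exp (Complex.I * (k : ℂ) * (Δs : ℂ)) ≠ 1)
    (z : ℕ → ℂ)  -- `z m` stands for `y_{-m}`
    (hrec : ∀ m : ℕ, z (m + 1) =
      z m - (Δs : ℂ) * ∑ j, (b j : ℂ) * Λ (-(((m : ℝ) + c j) * Δs))) :
    z M = z 0 + ∫ s in (0:ℝ)..(-(2 * π)), Λ s ∧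
    z M = z 0 - ∫ s in (-(2 * π))..(0:ℝ), Λ s := by
  have hMne : (M:ℂ) ≠ 0 := by exact_mod_cast hM.ne'
  have hΔsM : (Δs:ℂ) * M = 2 * π := by
    rw [hΔs]; push_cast; field_simp
  -- Step 1: unfold the recursion
  have hz : ∀ n : ℕ, z n = z 0 - (Δs:ℂ) *
      ∑ m ∈ Finset.range n, ∑ j, (b j : ℂ) * Λ (-(((m:ℝ) + c j) * Δs)) := by
    intro n
    induction n with
    | zero => simp
    | succ n ih => rw [hrec n, ih, Finset.sum_range_succ]; ring
  -- Step 2: evaluate the discrete sum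
  have key : (Δs:ℂ) * ∑ m ∈ Finset.range M, ∑ j, (b j : ℂ) * Λ (-(((m:ℝ) + c j) * Δs))
      = ∑ k ∈ K, (if k = 0 then (2*π:ℂ) * a k else 0) := by
    have hS : ∑ m ∈ Finset.range M, ∑ j, (b j : ℂ) * Λ (-(((m:ℝ) + c j) * Δs))
        = ∑ k ∈ K, (if k = 0 then (M:ℂ) * a k else 0) := by
      simp only [hΛ, Finset.mul_sum]
      push_cast
      have h1 : ∑ m ∈ Finset.range M, ∑ j, ∑ k ∈ K,
            (b j : ℂ) * (a k * Complex.exp (Complex.I * (k:ℂ) * (-(((m:ℂ) + ((c j : ℝ) : ℂ)) * ((Δs:ℝ) : ℂ)))))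
          = ∑ k ∈ K, ∑ m ∈ Finset.range M, ∑ j,
            (b j : ℂ) * (a k * Complex.exp (Complex.I * (k:ℂ) * (-(((m:ℂ) + ((c j : ℝ) : ℂ)) * ((Δs:ℝ) : ℂ))))) := by
        exact (Finset.sum_congr rfl fun m _ => Finset.sum_comm).trans Finset.sum_comm
      rw [h1]
      refine Finset.sum_congr rfl fun k hk => ?_
      rcases eq_or_ne k 0 with hk0 | hk0
      · subst hk0
        simp only [if_pos rfl, Int.cast_zero, mul_zero, zero_mul, Complex.exp_zero, mul_one]
        have hb : ∑ j, (b j : ℂ) * a 0 = a 0 := by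
          rw [← Finset.sum_mul]
          norm_cast
          simp [hconsistent]
        simp [hb, Finset.sum_const, Finset.card_range]
      · rw [if_neg hk0]
        set E : ℂ := Complex.exp (-(Complex.I * (k:ℂ) * (Δs:ℂ))) with hE
        have hexp : ∀ (m : ℕ) (j : Fin σ),
            Complex.exp (Complex.I * (k:ℂ) * (-(((m:ℂ) + ((c j : ℝ) : ℂ)) * ((Δs:ℝ) : ℂ))))
            = Complex.exp (-(Complex.I * (k:ℂ) * ((c j : ℝ):ℂ) * (Δs:ℂ))) * E ^ m := by
          intro m j
          rw [hE, ← Complex.exp_nat_mul, ← Complex.exp_add]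
          congr 1
          push_cast
          ring
        have hE1 : E ≠ 1 := by
          rw [hE, Complex.exp_neg, ne_eq, inv_eq_one]
          exact halias k hk hk0
        have hEM : E ^ M = 1 := by
          rw [hE, ← Complex.exp_nat_mul]
          have harg : (M:ℂ) * (-(Complex.I * (k:ℂ) * (Δs:ℂ)))
              = ((-k : ℤ):ℂ) * (2 * (π:ℂ) * Complex.I) := by
            push_cast
            linear_combination (-Complex.I * (k:ℂ)) * hΔsM
          rw [harg, Complex.exp_int_mul_two_pi_mul_I]
        have hgeom : ∑ m ∈ Finset.range M, E ^ m = 0 := by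
          rw [geom_sum_eq hE1, hEM, sub_self, zero_div]
        calc ∑ m ∈ Finset.range M, ∑ j,
              (b j : ℂ) * (a k * Complex.exp (Complex.I * (k:ℂ) * (-(((m:ℂ) + ((c j : ℝ) : ℂ)) * ((Δs:ℝ) : ℂ)))))
            = ∑ m ∈ Finset.range M, E ^ m *
              ∑ j, (b j : ℂ) * (a k * Complex.exp (-(Complex.I * (k:ℂ) * ((c j : ℝ):ℂ) * (Δs:ℂ)))) := by
              refine Finset.sum_congr rfl fun m _ => ?_
              rw [Finset.mul_sum]
              refine Finset.sum_congr rfl fun j _ => ?_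
              rw [hexp m j]; ring
          _ = 0 := by rw [← Finset.sum_mul, hgeom, zero_mul]
    rw [hS, Finset.mul_sum]
    refine Finset.sum_congr rfl fun k _ => ?_
    split
    · rw [← mul_assoc, hΔsM]
    · rw [mul_zero]
  -- Step 3: evaluate the integral
  have hint : (∫ s in (-(2*π))..(0:ℝ), Λ s)
      = ∑ k ∈ K, (if k = 0 then (2*π:ℂ) * a k else 0) := by
    have : (∫ s in (-(2*π))..(0:ℝ), Λ s)
        = ∑ k ∈ K, ∫ s in (-(2*π))..(0:ℝ), a k * Complex.exp (Complex.I * (k:ℂ) * (s:ℂ)) := by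
      simp only [hΛ]
      apply intervalIntegral.integral_finset_sum
      intro k _
      apply Continuous.intervalIntegrable
      fun_prop
    rw [this]
    refine Finset.sum_congr rfl fun k _ => ?_
    rcases eq_or_ne k 0 with hk | hk
    · subst hk
      simp [intervalIntegral.integral_const, Complex.real_smul]
    · simp only [hk, if_false]
      rw [intervalIntegral.integral_const_mul]
      have hc : (Complex.I * (k:ℂ)) ≠ 0 := by
        simp [Complex.I_ne_zero, Complex.ofReal_ne_zero, hk]
      have : (∫ s in (-(2*π))..(0:ℝ), Complex.exp (Complex.I * (k:ℂ) * (s:ℂ))) = 0 := by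
        rw [integral_exp_mul_complex hc]
        have h1 : Complex.exp (Complex.I * (k:ℂ) * ((0:ℝ):ℂ)) = 1 := by simp
        have h2 : Complex.exp (Complex.I * (k:ℂ) * ((-(2*π):ℝ):ℂ)) = 1 := by
          have : (Complex.I * (k:ℂ) * ((-(2*π):ℝ):ℂ)) = ((-k : ℤ):ℂ) * (2 * (π:ℂ) * Complex.I) := by
            push_cast; ring
          rw [this, Complex.exp_int_mul_two_pi_mul_I]
        rw [h1, h2]; simp
      rw [this, mul_zero]
  refine ⟨?_, ?_⟩
  · rw [hz M, key, hint.symm, intervalIntegral.integral_symm]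
    ring
  · rw [hz M, key, hint]
end
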